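/- arXiv:1812.04906 — 3 statements merged into one kernel-verified Lean document; each statement's English description precedes it below -/
import Mathlib

section
/- Let K_1,…,K_n be positive semidefinite symmetric m×m real matrices, let ρ_e > 0 and δ_e ∈ [0,1] for e = 1,…,n, and suppose K(δ) = ∑_e ρ_e E(δ_e) K_e is positive definite (where E(δ) = ((1-δ)/E_0 + δ/E_D)^{-1} with 0 < E_D < E_0). Then the function J(δ, u) = 2 f^T u − u^T K(δ) u (for any fixed f ∈ ℝ^m) is concave in the joint variable (δ, u) ∈ [0,1]^n × ℝ^m. Concretely, its Hessian H satisfies (x,y)^T H (x,y) = −∑_e ρ_e E(δ_e) (y − v_e)^T K_e (y − v_e) ≤ 0 where v_e = x_e E(δ_e)(1/E_D − 1/E_0) u. -/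
open Matrix Finset

lemma dot_sym' {m : ℕ} {K : Matrix (Fin m) (Fin m) ℝ} (hK : K.PosSemidef) (u v : Fin m → ℝ) :
    u ⬝ᵥ K.mulVec v = v ⬝ᵥ K.mulVec u := by
  have h : Kᵀ = K := by simpa using hK.1.eq
  rw [dotProduct_mulVec, ← mulVec_transpose, h, dotProduct_comm]

lemma dot_nonneg' {m : ℕ} {K : Matrix (Fin m) (Fin m) ℝ} (hK : K.PosSemidef) (u : Fin m → ℝ) :
    0 ≤ u ⬝ᵥ K.mulVec u := by
  have := hK.dotProduct_mulVec_nonneg u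
  simpa using this

lemma expand2' {m : ℕ} (K : Matrix (Fin m) (Fin m) ℝ) (a b : ℝ) (u v : Fin m → ℝ) :
    (a • u + b • v) ⬝ᵥ K.mulVec (a • u + b • v)
      = a^2 * (u ⬝ᵥ K.mulVec u) + a*b*(u ⬝ᵥ K.mulVec v) + a*b*(v ⬝ᵥ K.mulVec u)
        + b^2 * (v ⬝ᵥ K.mulVec v) := by
  simp [mulVec_add, mulVec_smul, add_dotProduct, dotProduct_add, smul_dotProduct,
    dotProduct_smul, smul_eq_mul]
  ring

lemma expandsub' {m : ℕ} (K : Matrix (Fin m) (Fin m) ℝ) (c : ℝ) (u y : Fin m → ℝ) :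
    (y - c • u) ⬝ᵥ K.mulVec (y - c • u)
      = (y ⬝ᵥ K.mulVec y) - c*(y ⬝ᵥ K.mulVec u) - c*(u ⬝ᵥ K.mulVec y)
        + c^2 * (u ⬝ᵥ K.mulVec u) := by
  simp [mulVec_sub, mulVec_smul, sub_dotProduct, dotProduct_sub, smul_dotProduct,
    dotProduct_smul, smul_eq_mul]
  ring

lemma quadlin' {m : ℕ} {K : Matrix (Fin m) (Fin m) ℝ} (hK : K.PosSemidef)
    {A B a b : ℝ} (hA : 0 < A) (hB : 0 < B) (ha : 0 ≤ a) (hb : 0 ≤ b) (hab : a + b = 1)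
    (u v : Fin m → ℝ) :
    ((a • u + b • v) ⬝ᵥ K.mulVec (a • u + b • v)) / (a*A + b*B)
      ≤ a * ((u ⬝ᵥ K.mulVec u)/A) + b * ((v ⬝ᵥ K.mulVec v)/B) := by
  set Qu := u ⬝ᵥ K.mulVec u with hQu
  set Qv := v ⬝ᵥ K.mulVec v with hQv
  set W := u ⬝ᵥ K.mulVec v with hW
  have hsym := dot_sym' hK u v
  have hden : 0 < a*A + b*B := by
    rcases ha.eq_or_lt with h|h
    · nlinarith [mul_pos (show (0:ℝ) < b by linarith) hB]
    · nlinarith [mul_pos h hA, mul_nonneg hb hB.le]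
  have hkey : 0 ≤ B^2*Qu - 2*A*B*W + A^2*Qv := by
    have h0 := dot_nonneg' hK (B • u + (-A) • v)
    rw [expand2', ← hsym] at h0
    nlinarith [h0]
  have hexp : (a • u + b • v) ⬝ᵥ K.mulVec (a • u + b • v)
      = a^2*Qu + 2*a*b*W + b^2*Qv := by
    rw [expand2', ← hsym]; ring
  have hrhs : a * (Qu/A) + b * (Qv/B) = (a*Qu*B + b*Qv*A)/(A*B) := by
    field_simp
  rw [hexp, hrhs, div_le_div_iff₀ hden (by positivity)]
  nlinarith [mul_nonneg (mul_nonneg ha hb) hkey]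

lemma dotsum' {n m : ℕ} (c : Fin n → ℝ) (K : Fin n → Matrix (Fin m) (Fin m) ℝ)
    (y : Fin m → ℝ) :
    y ⬝ᵥ (∑ e, (c e) • K e).mulVec y = ∑ e, c e * (y ⬝ᵥ (K e).mulVec y) := by
  simp only [dotProduct, Matrix.mulVec, Matrix.sum_apply, Matrix.smul_apply, smul_eq_mul,
    Finset.mul_sum, Finset.sum_mul]
  rw [show (∑ x : Fin m, ∑ x_1 : Fin m, ∑ i : Fin n, y x * (c i * K i x x_1 * y x_1))
      = ∑ x : Fin m, ∑ i : Fin n, ∑ x_1 : Fin m, y x * (c i * K i x x_1 * y x_1) from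
      Finset.sum_congr rfl fun x _ => Finset.sum_comm, Finset.sum_comm]
  exact Finset.sum_congr rfl fun e _ => Finset.sum_congr rfl fun i _ =>
    Finset.sum_congr rfl fun j _ => by ring

/-- Concavity of `J(δ,u) = 2 fᵀu − uᵀ K(δ) u` with
`K(δ) = ∑ₑ ρₑ E(δₑ) Kₑ`, `E(δ) = ((1-δ)/E_0 + δ/E_D)⁻¹`:
`J` is concave on `[0,1]ⁿ × ℝᵐ` and its Hessian quadratic form equals
`−∑ₑ ρₑ E(δₑ) (y − vₑ)ᵀ Kₑ (y − vₑ) ≤ 0` where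
`vₑ = xₑ E(δₑ)(1/E_D − 1/E_0) u`. -/
theorem stmt_6 (n m : ℕ) (E0 ED : ℝ) (hED : 0 < ED) (hlt : ED < E0)
    (K : Fin n → Matrix (Fin m) (Fin m) ℝ) (hK : ∀ e, (K e).PosSemidef)
    (ρ : Fin n → ℝ) (hρ : ∀ e, 0 < ρ e)
    (f : Fin m → ℝ)
    (E : ℝ → ℝ) (hE : ∀ t, E t = ((1 - t) / E0 + t / ED)⁻¹)
    (hKpd : ∀ δ : Fin n → ℝ, (∀ e, δ e ∈ Set.Icc (0:ℝ) 1) →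
      (∑ e, (ρ e * E (δ e)) • K e).PosDef) :
    ConcaveOn ℝ (((Set.univ : Set (Fin n)).pi fun _ => Set.Icc (0:ℝ) 1) ×ˢ
        (Set.univ : Set (Fin m → ℝ)))
      (fun p : (Fin n → ℝ) × (Fin m → ℝ) =>
        2 * (f ⬝ᵥ p.2) - p.2 ⬝ᵥ (∑ e, (ρ e * E (p.1 e)) • K e).mulVec p.2) ∧
    ∀ (δ : Fin n → ℝ), (∀ e, δ e ∈ Set.Icc (0:ℝ) 1) →
      ∀ (u : Fin m → ℝ) (x : Fin n → ℝ) (y : Fin m → ℝ),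
      (-(∑ e, x e ^ 2 * ρ e * (E (δ e)) ^ 3 * (1 / ED - 1 / E0) ^ 2 *
            (u ⬝ᵥ (K e).mulVec u))
        + 2 * (∑ e, x e * ρ e * (E (δ e)) ^ 2 * (1 / ED - 1 / E0) *
            (y ⬝ᵥ (K e).mulVec u))
        - y ⬝ᵥ (∑ e, (ρ e * E (δ e)) • K e).mulVec y)
        = -(∑ e, ρ e * E (δ e) *
            ((y - (x e * E (δ e) * (1 / ED - 1 / E0)) • u) ⬝ᵥ
              (K e).mulVec (y - (x e * E (δ e) * (1 / ED - 1 / E0)) • u))) ∧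
      (-(∑ e, x e ^ 2 * ρ e * (E (δ e)) ^ 3 * (1 / ED - 1 / E0) ^ 2 *
            (u ⬝ᵥ (K e).mulVec u))
        + 2 * (∑ e, x e * ρ e * (E (δ e)) ^ 2 * (1 / ED - 1 / E0) *
            (y ⬝ᵥ (K e).mulVec u))
        - y ⬝ᵥ (∑ e, (ρ e * E (δ e)) • K e).mulVec y) ≤ 0 := by
  have hE0 : 0 < E0 := hED.trans hlt
  set L : ℝ → ℝ := fun t => (1 - t) / E0 + t / ED with hLdef
  have hEL : ∀ t, E t = (L t)⁻¹ := hE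
  have hLpos : ∀ t ∈ Set.Icc (0:ℝ) 1, 0 < L t := by
    intro t ht
    rcases lt_or_ge t 1 with h|h
    · exact add_pos_of_pos_of_nonneg (div_pos (by linarith) hE0) (div_nonneg ht.1 hED.le)
    · exact add_pos_of_nonneg_of_pos (div_nonneg (by linarith [ht.2]) hE0.le)
        (div_pos (by linarith) hED)
  have hEpos : ∀ t ∈ Set.Icc (0:ℝ) 1, 0 < E t := fun t ht => by
    rw [hEL]; exact inv_pos.2 (hLpos t ht)
  have hLaff : ∀ a b s t : ℝ, a + b = 1 → L (a*s + b*t) = a * L s + b * L t := by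
    intro a b s t hab
    simp only [hLdef]
    field_simp
    nlinarith [hab]
  constructor
  · -- concavity
    refine ⟨(convex_pi fun i _ => convex_Icc (0:ℝ) 1).prod convex_univ, ?_⟩
    rintro ⟨δ, u⟩ hp ⟨δ', v⟩ hq a b ha hb hab
    have hδ : ∀ e, δ e ∈ Set.Icc (0:ℝ) 1 := fun e => hp.1 e (Set.mem_univ e)
    have hδ' : ∀ e, δ' e ∈ Set.Icc (0:ℝ) 1 := fun e => hq.1 e (Set.mem_univ e)
    simp only [smul_eq_mul, Prod.smul_mk, Prod.mk_add_mk, Pi.add_apply, Pi.smul_apply]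
    rw [dotsum', dotsum', dotsum']
    have hf : f ⬝ᵥ (a • u + b • v) = a * (f ⬝ᵥ u) + b * (f ⬝ᵥ v) := by
      simp [dotProduct_add, dotProduct_smul, smul_eq_mul]
    have hterm : ∀ e, ρ e * E (a • δ e + b • δ' e) *
          ((a • u + b • v) ⬝ᵥ (K e).mulVec (a • u + b • v))
        ≤ a * (ρ e * E (δ e) * (u ⬝ᵥ (K e).mulVec u))
          + b * (ρ e * E (δ' e) * (v ⬝ᵥ (K e).mulVec v)) := by
      intro e
      have hA := hLpos _ (hδ e)
      have hB := hLpos _ (hδ' e)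
      have hql := quadlin' (hK e) hA hB ha hb hab u v
      have hcomb : E (a • δ e + b • δ' e) = (a * L (δ e) + b * L (δ' e))⁻¹ := by
        rw [smul_eq_mul, smul_eq_mul, hEL, hLaff a b _ _ hab]
      calc ρ e * E (a • δ e + b • δ' e) *
            ((a • u + b • v) ⬝ᵥ (K e).mulVec (a • u + b • v))
          = ρ e * (((a • u + b • v) ⬝ᵥ (K e).mulVec (a • u + b • v))
              / (a * L (δ e) + b * L (δ' e))) := by
            rw [hcomb, div_eq_mul_inv]; ring
        _ ≤ ρ e * (a * ((u ⬝ᵥ (K e).mulVec u) / L (δ e))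
              + b * ((v ⬝ᵥ (K e).mulVec v) / L (δ' e))) :=
            mul_le_mul_of_nonneg_left hql (hρ e).le
        _ = a * (ρ e * E (δ e) * (u ⬝ᵥ (K e).mulVec u))
              + b * (ρ e * E (δ' e) * (v ⬝ᵥ (K e).mulVec v)) := by
            rw [hEL (δ e), hEL (δ' e), div_eq_mul_inv, div_eq_mul_inv]; ring
    have hsum := Finset.sum_le_sum (fun e (_ : e ∈ Finset.univ) => hterm e)
    rw [Finset.sum_add_distrib, ← Finset.mul_sum, ← Finset.mul_sum] at hsum
    simp only [smul_eq_mul] at hsum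
    rw [hf]
    linarith [hsum]
  · -- Hessian identity and sign
    intro δ hδ u x y
    have hid : ∀ e, ρ e * E (δ e) *
          ((y - (x e * E (δ e) * (1 / ED - 1 / E0)) • u) ⬝ᵥ
            (K e).mulVec (y - (x e * E (δ e) * (1 / ED - 1 / E0)) • u))
        = x e ^ 2 * ρ e * (E (δ e)) ^ 3 * (1 / ED - 1 / E0) ^ 2 *
            (u ⬝ᵥ (K e).mulVec u)
          - 2 * (x e * ρ e * (E (δ e)) ^ 2 * (1 / ED - 1 / E0) *
            (y ⬝ᵥ (K e).mulVec u))
          + ρ e * E (δ e) * (y ⬝ᵥ (K e).mulVec y) := by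
      intro e
      rw [expandsub', dot_sym' (hK e) u y]
      ring
    have hmain : (-(∑ e, x e ^ 2 * ρ e * (E (δ e)) ^ 3 * (1 / ED - 1 / E0) ^ 2 *
            (u ⬝ᵥ (K e).mulVec u))
        + 2 * (∑ e, x e * ρ e * (E (δ e)) ^ 2 * (1 / ED - 1 / E0) *
            (y ⬝ᵥ (K e).mulVec u))
        - y ⬝ᵥ (∑ e, (ρ e * E (δ e)) • K e).mulVec y)
        = -(∑ e, ρ e * E (δ e) *
            ((y - (x e * E (δ e) * (1 / ED - 1 / E0)) • u) ⬝ᵥ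
              (K e).mulVec (y - (x e * E (δ e) * (1 / ED - 1 / E0)) • u))) := by
      rw [dotsum', Finset.sum_congr rfl fun e _ => hid e, Finset.sum_add_distrib,
        Finset.sum_sub_distrib, ← Finset.mul_sum]
      ring
    refine ⟨hmain, ?_⟩
    rw [hmain]
    refine neg_nonpos.2 (Finset.sum_nonneg fun e _ => ?_)
    exact mul_nonneg (mul_nonneg (hρ e).le (hEpos _ (hδ e)).le) (dot_nonneg' (hK e) _)
end

section
/- Under the assumptions of the previous statement, for every ε > 0 the Tikhonov-regularized functional J_ε(δ,u) = 2 f^T u − ∑_e ρ_e E(δ_e) u^T K_e u − (ε/2)‖δ‖² is strictly concave in (δ,u); in particular its Hessian quadratic form satisfies (x,y)^T H_ε (x,y) = −∑_e ρ_e E(δ_e) (y − v_e)^T K_e (y − v_e) − ε‖x‖² < 0 for all (x,y) ≠ 0. -/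
open Matrix Finset

private lemma symm_form {m : ℕ} {K : Matrix (Fin m) (Fin m) ℝ} (hK : K.PosSemidef)
    (u w : Fin m → ℝ) : w ⬝ᵥ K *ᵥ u = u ⬝ᵥ K *ᵥ w := by
  nth_rewrite 1 [← hK.1.eq]
  rw [conjTranspose_eq_transpose_of_trivial, mulVec_transpose, dotProduct_comm,
    ← dotProduct_mulVec]

private lemma expand_form {m : ℕ} {K : Matrix (Fin m) (Fin m) ℝ} (hK : K.PosSemidef)
    (a b : ℝ) (u u' : Fin m → ℝ) :
    (a • u + b • u') ⬝ᵥ K *ᵥ (a • u + b • u') =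
      a^2 * (u ⬝ᵥ K *ᵥ u) + 2*a*b*(u ⬝ᵥ K *ᵥ u') + b^2 * (u' ⬝ᵥ K *ᵥ u') := by
  simp only [mulVec_add, mulVec_smul, dotProduct_add, add_dotProduct, dotProduct_smul,
    smul_dotProduct, smul_eq_mul, symm_form hK u u']
  ring

private lemma form_nonneg {m : ℕ} {K : Matrix (Fin m) (Fin m) ℝ} (hK : K.PosSemidef)
    (u : Fin m → ℝ) : 0 ≤ u ⬝ᵥ K *ᵥ u := by
  simpa using hK.dotProduct_mulVec_nonneg u

private lemma key_ineq {m : ℕ} {K : Matrix (Fin m) (Fin m) ℝ} (hK : K.PosSemidef)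
    (s s' : ℝ) (u u' : Fin m → ℝ) :
    0 ≤ s'^2 * (u ⬝ᵥ K *ᵥ u) - 2*s*s'*(u ⬝ᵥ K *ᵥ u') + s^2 * (u' ⬝ᵥ K *ᵥ u') := by
  have h := form_nonneg hK (s' • u + (-s) • u')
  rw [expand_form hK s' (-s) u u'] at h
  nlinarith [h]

private lemma edge_ineq {m : ℕ} {K : Matrix (Fin m) (Fin m) ℝ} (hK : K.PosSemidef)
    (s s' a b : ℝ) (hs : 0 < s) (hs' : 0 < s') (ha : 0 < a) (hb : 0 < b)
    (u u' : Fin m → ℝ) :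
    ((a • u + b • u') ⬝ᵥ K *ᵥ (a • u + b • u')) / (a*s + b*s') ≤
      a * ((u ⬝ᵥ K *ᵥ u) / s) + b * ((u' ⬝ᵥ K *ᵥ u') / s') := by
  set Q := u ⬝ᵥ K *ᵥ u with hQdef
  set Q' := u' ⬝ᵥ K *ᵥ u' with hQ'def
  set C := u ⬝ᵥ K *ᵥ u' with hCdef
  have hmid : 0 < a*s + b*s' := by positivity
  have hkey := key_ineq hK s s' u u'
  rw [expand_form hK a b u u']
  have h2 : a * (Q / s) + b * (Q' / s') = (a*Q*s' + b*Q'*s) / (s*s') := by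
    field_simp
  rw [h2, div_le_div_iff₀ hmid (by positivity)]
  nlinarith [mul_nonneg (mul_pos ha hb).le hkey]

private lemma sum_quad_form {n m : ℕ} (c : Fin n → ℝ) (K : Fin n → Matrix (Fin m) (Fin m) ℝ)
    (w : Fin m → ℝ) :
    w ⬝ᵥ (∑ e, c e • K e) *ᵥ w = ∑ e, c e * (w ⬝ᵥ (K e) *ᵥ w) := by
  induction (Finset.univ : Finset (Fin n)) using Finset.induction with
  | empty => simp
  | insert _ _ h ih =>
    rw [Finset.sum_insert h, Finset.sum_insert h, Matrix.add_mulVec, dotProduct_add, ih,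
      smul_mulVec, dotProduct_smul, smul_eq_mul]

/-- Strict concavity of the Tikhonov-regularized functional
`J_ε(δ,u) = 2 fᵀu − ∑ₑ ρₑ E(δₑ) uᵀKₑu − (ε/2)‖δ‖²` for `ε > 0`,
and strict negativity of the Hessian quadratic form
`−∑ₑ ρₑ E(δₑ)(y−vₑ)ᵀKₑ(y−vₑ) − ε‖x‖² < 0` for `(x,y) ≠ 0`. -/
theorem stmt_7 (n m : ℕ) (E0 ED ε : ℝ) (hED : 0 < ED) (hlt : ED < E0)
    (hε : 0 < ε)
    (K : Fin n → Matrix (Fin m) (Fin m) ℝ) (hK : ∀ e, (K e).PosSemidef)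
    (ρ : Fin n → ℝ) (hρ : ∀ e, 0 < ρ e)
    (f : Fin m → ℝ)
    (E : ℝ → ℝ) (hE : ∀ t, E t = ((1 - t) / E0 + t / ED)⁻¹)
    (hKpd : ∀ δ : Fin n → ℝ, (∀ e, δ e ∈ Set.Icc (0:ℝ) 1) →
      (∑ e, (ρ e * E (δ e)) • K e).PosDef) :
    StrictConcaveOn ℝ (((Set.univ : Set (Fin n)).pi fun _ => Set.Icc (0:ℝ) 1) ×ˢ
        (Set.univ : Set (Fin m → ℝ)))
      (fun p : (Fin n → ℝ) × (Fin m → ℝ) =>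
        2 * (f ⬝ᵥ p.2) - (∑ e, ρ e * E (p.1 e) * (p.2 ⬝ᵥ (K e).mulVec p.2))
          - ε / 2 * (∑ e, p.1 e ^ 2)) ∧
    ∀ (δ : Fin n → ℝ), (∀ e, δ e ∈ Set.Icc (0:ℝ) 1) →
      ∀ (u : Fin m → ℝ) (x : Fin n → ℝ) (y : Fin m → ℝ),
      (x, y) ≠ (0, 0) →
      (-(∑ e, ρ e * E (δ e) *
          ((y - (x e * E (δ e) * (1 / ED - 1 / E0)) • u) ⬝ᵥ
            (K e).mulVec (y - (x e * E (δ e) * (1 / ED - 1 / E0)) • u)))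
        - ε * (∑ e, x e ^ 2)) < 0 := by
  have hE0 : 0 < E0 := hED.trans hlt
  have hE0' : E0 ≠ 0 := ne_of_gt hE0
  have hED' : ED ≠ 0 := ne_of_gt hED
  set sf : ℝ → ℝ := fun t => (1 - t) / E0 + t / ED with hsf
  have hone : (1:ℝ)/E0 ≤ 1/ED := one_div_le_one_div_of_le hED hlt.le
  have hspos : ∀ t ∈ Set.Icc (0:ℝ) 1, 0 < sf t := by
    intro t ht
    have h1 : (1-t)/E0 + t/E0 = 1/E0 := by field_simp; ring
    have h2 : t/E0 ≤ t/ED := by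
      rw [div_eq_mul_one_div, div_eq_mul_one_div t ED]
      exact mul_le_mul_of_nonneg_left hone ht.1
    have h3 : 0 < 1/E0 := by positivity
    show 0 < (1-t)/E0 + t/ED
    linarith
  have hEeq : ∀ t, E t = 1 / sf t := by
    intro t; simp only [hsf]; rw [hE t, one_div]
  have hEpos : ∀ t ∈ Set.Icc (0:ℝ) 1, 0 < E t := by
    intro t ht
    have := hspos t ht
    rw [hEeq]
    positivity
  constructor
  · constructor
    · exact (convex_pi (fun i _ => convex_Icc (0:ℝ) 1)).prod convex_univ
    · rintro ⟨δ, u⟩ hp ⟨δ', u'⟩ hq hne a b ha hb hab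
      have hδm : ∀ e, δ e ∈ Set.Icc (0:ℝ) 1 := fun e => hp.1 e (Set.mem_univ e)
      have hδ'm : ∀ e, δ' e ∈ Set.Icc (0:ℝ) 1 := fun e => hq.1 e (Set.mem_univ e)
      have haff : ∀ t t' : ℝ, sf (a*t+b*t') = a * sf t + b * sf t' := by
        intro t t'
        have hb1 : b = 1 - a := by linarith
        subst hb1
        simp only [hsf]
        field_simp
        ring
      simp only [Prod.smul_mk, Prod.mk_add_mk, Pi.add_apply, Pi.smul_apply, smul_eq_mul]
      -- linear part
      have hf : f ⬝ᵥ (a • u + b • u') = a*(f ⬝ᵥ u) + b*(f ⬝ᵥ u') := by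
        simp [dotProduct_add, dotProduct_smul, smul_eq_mul]
      -- edge-wise convexity of the quadratic part
      have hedge : ∀ e, ρ e * E (a * δ e + b * δ' e) *
            ((a • u + b • u') ⬝ᵥ (K e) *ᵥ (a • u + b • u')) ≤
          a * (ρ e * E (δ e) * (u ⬝ᵥ (K e) *ᵥ u)) +
          b * (ρ e * E (δ' e) * (u' ⬝ᵥ (K e) *ᵥ u')) := by
        intro e
        have hs := hspos _ (hδm e)
        have hs' := hspos _ (hδ'm e)
        have h := mul_le_mul_of_nonneg_left
          (edge_ineq (hK e) (sf (δ e)) (sf (δ' e)) a b hs hs' ha hb u u') (hρ e).le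
        have e1 : ρ e * E (a * δ e + b * δ' e) *
            ((a • u + b • u') ⬝ᵥ (K e) *ᵥ (a • u + b • u')) =
            ρ e * (((a • u + b • u') ⬝ᵥ (K e) *ᵥ (a • u + b • u')) /
              (a * sf (δ e) + b * sf (δ' e))) := by
          rw [hEeq, haff]; ring
        have e2 : a * (ρ e * E (δ e) * (u ⬝ᵥ (K e) *ᵥ u)) +
            b * (ρ e * E (δ' e) * (u' ⬝ᵥ (K e) *ᵥ u')) =
            ρ e * (a * ((u ⬝ᵥ (K e) *ᵥ u) / sf (δ e)) +
              b * ((u' ⬝ᵥ (K e) *ᵥ u') / sf (δ' e))) := by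
          rw [hEeq, hEeq]; ring
        rw [e1, e2]
        exact h
      have hBsum : ∑ e, ρ e * E (a * δ e + b * δ' e) *
            ((a • u + b • u') ⬝ᵥ (K e) *ᵥ (a • u + b • u')) ≤
          a * (∑ e, ρ e * E (δ e) * (u ⬝ᵥ (K e) *ᵥ u)) +
          b * (∑ e, ρ e * E (δ' e) * (u' ⬝ᵥ (K e) *ᵥ u')) := by
        rw [Finset.mul_sum, Finset.mul_sum, ← Finset.sum_add_distrib]
        exact Finset.sum_le_sum fun e _ => hedge e
      by_cases hdd : δ = δ'
      · -- δ = δ' : strictness from posdef in u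
        subst hdd
        have hu : u ≠ u' := by
          intro h; exact hne (by rw [h])
        have hd : u - u' = (1:ℝ) • u + (-1:ℝ) • u' := by module
        -- per-edge exact gap
        have hper : ∀ e, a * (ρ e * E (δ e) * (u ⬝ᵥ (K e) *ᵥ u)) +
              b * (ρ e * E (δ e) * (u' ⬝ᵥ (K e) *ᵥ u')) -
              ρ e * E (a * δ e + b * δ e) *
                ((a • u + b • u') ⬝ᵥ (K e) *ᵥ (a • u + b • u')) =
            a * b * ((ρ e * E (δ e)) * ((u - u') ⬝ᵥ (K e) *ᵥ (u - u'))) := by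
          intro e
          have hmid : a * δ e + b * δ e = δ e := by linear_combination (δ e) * hab
          rw [hmid, expand_form (hK e) a b u u', hd, expand_form (hK e) 1 (-1) u u']
          have hb1 : b = 1 - a := by linarith
          subst hb1
          ring
        have hsumgap : ∑ e, (a * (ρ e * E (δ e) * (u ⬝ᵥ (K e) *ᵥ u)) +
              b * (ρ e * E (δ e) * (u' ⬝ᵥ (K e) *ᵥ u')) -
              ρ e * E (a * δ e + b * δ e) *
                ((a • u + b • u') ⬝ᵥ (K e) *ᵥ (a • u + b • u'))) =
            a * b * ((u - u') ⬝ᵥ (∑ e, (ρ e * E (δ e)) • K e) *ᵥ (u - u')) := by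
          rw [sum_quad_form, Finset.mul_sum]
          exact Finset.sum_congr rfl fun e _ => hper e
        have hpd := (hKpd δ hδm).dotProduct_mulVec_pos (sub_ne_zero.2 hu)
        simp only [star_trivial] at hpd
        have hsq : ∀ e, (a * δ e + b * δ e)^2 = δ e ^ 2 := by
          intro e
          have : a * δ e + b * δ e = δ e := by linear_combination (δ e) * hab
          rw [this]
        have hεeq : ∑ e, (a * δ e + b * δ e)^2 = ∑ e, δ e ^ 2 :=
          Finset.sum_congr rfl fun e _ => hsq e
        have hgap : a * (∑ e, ρ e * E (δ e) * (u ⬝ᵥ (K e) *ᵥ u)) +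
            b * (∑ e, ρ e * E (δ e) * (u' ⬝ᵥ (K e) *ᵥ u')) -
            ∑ e, ρ e * E (a * δ e + b * δ e) *
              ((a • u + b • u') ⬝ᵥ (K e) *ᵥ (a • u + b • u')) =
            a * b * ((u - u') ⬝ᵥ (∑ e, (ρ e * E (δ e)) • K e) *ᵥ (u - u')) := by
          rw [← hsumgap, Finset.sum_sub_distrib, Finset.sum_add_distrib,
            ← Finset.mul_sum, ← Finset.mul_sum]
        have habpos : 0 < a * b := mul_pos ha hb
        have h1 : a * (ε/2 * ∑ e, δ e ^ 2) + b * (ε/2 * ∑ e, δ e ^ 2) =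
            ε/2 * ∑ e, δ e ^ 2 := by
          linear_combination (ε/2 * ∑ e, δ e ^ 2) * hab
        have hεeq2 : ε/2 * ∑ e, (a * δ e + b * δ e)^2 = ε/2 * ∑ e, δ e ^ 2 := by
          rw [hεeq]
        linarith [mul_pos habpos hpd, hf, hεeq2, hgap, h1]
      · -- δ ≠ δ' : strictness from the Tikhonov term
        obtain ⟨e0, he0⟩ := Function.ne_iff.mp hdd
        have hsq : ∀ e, a * (δ e)^2 + b * (δ' e)^2 - (a * δ e + b * δ' e)^2 =
            a * b * (δ e - δ' e)^2 := by
          intro e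
          have hb1 : b = 1 - a := by linarith
          rw [hb1]; ring
        have hεsum : a * (∑ e, (δ e)^2) + b * (∑ e, (δ' e)^2) -
            ∑ e, (a * δ e + b * δ' e)^2 = a * b * ∑ e, (δ e - δ' e)^2 := by
          rw [Finset.mul_sum, Finset.mul_sum, ← Finset.sum_add_distrib,
            ← Finset.sum_sub_distrib, Finset.mul_sum]
          exact Finset.sum_congr rfl fun e _ => hsq e
        have hD : (δ e0 - δ' e0)^2 ≤ ∑ e, (δ e - δ' e)^2 :=
          Finset.single_le_sum (f := fun e => (δ e - δ' e)^2)
            (fun e _ => sq_nonneg _) (Finset.mem_univ e0)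
        have hne0 : δ e0 - δ' e0 ≠ 0 := sub_ne_zero.2 he0
        have habpos : 0 < a * b := mul_pos ha hb
        have hD2 : a*b*(δ e0 - δ' e0)^2 ≤ a*b*∑ e, (δ e - δ' e)^2 :=
          mul_le_mul_of_nonneg_left hD habpos.le
        have hD3 : 0 < ε/2 * (a*b*(δ e0 - δ' e0)^2) := by positivity
        have hD4 : ε/2 * (a*b*(δ e0 - δ' e0)^2) ≤ ε/2 * (a*b*∑ e, (δ e - δ' e)^2) :=
          mul_le_mul_of_nonneg_left hD2 (by positivity)
        have hD5 : ε/2 * (a * (∑ e, (δ e)^2) + b * (∑ e, (δ' e)^2) -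
            ∑ e, (a * δ e + b * δ' e)^2) = ε/2 * (a*b*∑ e, (δ e - δ' e)^2) := by
          rw [hεsum]
        linarith [hBsum, hf, hD3, hD4, hD5]
  · -- Hessian strict negativity
    intro δ hδ u x y hxy
    have hEp : ∀ e, 0 < E (δ e) := fun e => hEpos _ (hδ e)
    have hterm : ∀ e, 0 ≤ ρ e * E (δ e) *
        ((y - (x e * E (δ e) * (1 / ED - 1 / E0)) • u) ⬝ᵥ
          (K e).mulVec (y - (x e * E (δ e) * (1 / ED - 1 / E0)) • u)) := by
      intro e
      have := form_nonneg (hK e) (y - (x e * E (δ e) * (1 / ED - 1 / E0)) • u)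
      have h1 : 0 < ρ e * E (δ e) := mul_pos (hρ e) (hEp e)
      exact mul_nonneg h1.le this
    by_cases hx : x = 0
    · have hy : y ≠ 0 := by
        intro h; exact hxy (by rw [hx, h])
      subst hx
      have hzero : ∀ e : Fin n, ((0:Fin n → ℝ) e * E (δ e) * (1 / ED - 1 / E0)) • u = 0 := by
        intro e; simp
      have hsum1 : ∑ e, ρ e * E (δ e) *
          ((y - ((0:Fin n → ℝ) e * E (δ e) * (1 / ED - 1 / E0)) • u) ⬝ᵥ
            (K e).mulVec (y - ((0:Fin n → ℝ) e * E (δ e) * (1 / ED - 1 / E0)) • u)) =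
          y ⬝ᵥ (∑ e, (ρ e * E (δ e)) • K e) *ᵥ y := by
        rw [sum_quad_form]
        refine Finset.sum_congr rfl fun e _ => ?_
        rw [hzero e, sub_zero]
      have hpd := (hKpd δ hδ).dotProduct_mulVec_pos hy
      simp only [star_trivial] at hpd
      rw [hsum1]
      simp only [Pi.zero_apply]
      have : ∑ e : Fin n, (0:ℝ)^2 = 0 := by simp
      nlinarith [hpd]
    · obtain ⟨e0, he0⟩ := Function.ne_iff.mp hx
      have hxsum : 0 < ∑ e, x e ^ 2 := by
        have h1 : x e0 ^ 2 ≤ ∑ e, x e ^ 2 :=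
          Finset.single_le_sum (f := fun e => x e ^ 2)
            (fun e _ => sq_nonneg _) (Finset.mem_univ e0)
        have he0' : x e0 ≠ 0 := by simpa using he0
        have h2 : 0 < x e0 ^ 2 := by positivity
        linarith
      have hS : 0 ≤ ∑ e, ρ e * E (δ e) *
          ((y - (x e * E (δ e) * (1 / ED - 1 / E0)) • u) ⬝ᵥ
            (K e).mulVec (y - (x e * E (δ e) * (1 / ED - 1 / E0)) • u)) :=
        Finset.sum_nonneg fun e _ => hterm e
      linarith [hS, mul_pos hε hxsum]
end

section
/- Let K_e, ρ_e, E be as above and let μ* > 0. Then the barrier-regularized functional J_{μ*}(δ,u) = 2 f^T u − ∑_e ρ_e E(δ_e) u^T K_e u + μ* ∑_e (log δ_e + log(1−δ_e)) is strictly concave on (0,1)^n × ℝ^m, provided K(δ) = ∑_e ρ_e E(δ_e) K_e is positive definite for all δ ∈ (0,1)^n. -/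
open Matrix Finset

private lemma dot_sum_mulVec {n m : ℕ} (C : Fin n → Matrix (Fin m) (Fin m) ℝ) (d : Fin m → ℝ) :
    d ⬝ᵥ (∑ e, C e) *ᵥ d = ∑ e, d ⬝ᵥ (C e) *ᵥ d := by
  simp only [dotProduct, Matrix.mulVec, Matrix.sum_apply, Finset.mul_sum, Finset.sum_mul]
  have h1 : ∀ x : Fin m, ∑ x1 : Fin m, ∑ e : Fin n, d x * (C e x x1 * d x1)
      = ∑ e : Fin n, ∑ x1 : Fin m, d x * (C e x x1 * d x1) := fun x => Finset.sum_comm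
  simp_rw [h1]
  rw [Finset.sum_comm]

private lemma sym_dot {m : ℕ} (M : Matrix (Fin m) (Fin m) ℝ) (hM : Mᵀ = M) (u v : Fin m → ℝ) :
    v ⬝ᵥ M *ᵥ u = u ⬝ᵥ M *ᵥ v := by
  rw [Matrix.dotProduct_mulVec, ← Matrix.mulVec_transpose, hM, dotProduct_comm]

private lemma quad_expand {m : ℕ} (M : Matrix (Fin m) (Fin m) ℝ) (hM : Mᵀ = M)
    (a b : ℝ) (u v : Fin m → ℝ) :
    (a • u + b • v) ⬝ᵥ M *ᵥ (a • u + b • v)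
      = a^2 * (u ⬝ᵥ M *ᵥ u) + 2*a*b*(u ⬝ᵥ M *ᵥ v) + b^2 * (v ⬝ᵥ M *ᵥ v) := by
  have hsym := sym_dot M hM u v
  simp only [Matrix.mulVec_add, Matrix.mulVec_smul, dotProduct_add, add_dotProduct,
    dotProduct_smul, smul_dotProduct, smul_eq_mul]
  rw [hsym]; ring

private lemma key_scalar (Qu Qv B t s a b : ℝ) (ht : 0 < t) (hs : 0 < s)
    (ha : 0 < a) (hb : 0 < b) (hab : a + b = 1)
    (hQ : 0 ≤ s^2*Qu - 2*s*t*B + t^2*Qv) :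
    (a*t+b*s)⁻¹ * (a^2*Qu + 2*a*b*B + b^2*Qv) ≤ a * t⁻¹ * Qu + b * s⁻¹ * Qv := by
  have hts : 0 < a*t+b*s := by positivity
  have hid : a * t⁻¹ * Qu + b * s⁻¹ * Qv - (a*t+b*s)⁻¹ * (a^2*Qu + 2*a*b*B + b^2*Qv)
      = (a*b) * (s^2*Qu - 2*s*t*B + t^2*Qv) / (t*s*(a*t+b*s)) := by
    field_simp
    ring_nf
  nlinarith [div_nonneg (mul_nonneg (le_of_lt (mul_pos ha hb)) hQ)
    (le_of_lt (by positivity : (0:ℝ) < t*s*(a*t+b*s)))]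

private lemma bar_lt (a b x y : ℝ) (ha : 0 < a) (hb : 0 < b) (hab : a + b = 1)
    (hx : x ∈ Set.Ioo (0:ℝ) 1) (hy : y ∈ Set.Ioo (0:ℝ) 1) (hne : x ≠ y) :
    a * (Real.log x + Real.log (1-x)) + b * (Real.log y + Real.log (1-y))
      < Real.log (a*x+b*y) + Real.log (1-(a*x+b*y)) := by
  have h1 := strictConcaveOn_log_Ioi.2 (Set.mem_Ioi.2 hx.1) (Set.mem_Ioi.2 hy.1) hne ha hb hab
  have hne' : 1 - x ≠ 1 - y := fun h => hne (by linarith)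
  have h2 := strictConcaveOn_log_Ioi.2 (Set.mem_Ioi.2 (by linarith [hx.2] : (0:ℝ) < 1 - x))
    (Set.mem_Ioi.2 (by linarith [hy.2] : (0:ℝ) < 1 - y)) hne' ha hb hab
  simp only [smul_eq_mul] at h1 h2
  have h3 : a*(1-x)+b*(1-y) = 1 - (a*x+b*y) := by linear_combination hab
  rw [h3] at h2
  linarith

private lemma bar_le (a b x y : ℝ) (ha : 0 < a) (hb : 0 < b) (hab : a + b = 1)
    (hx : x ∈ Set.Ioo (0:ℝ) 1) (hy : y ∈ Set.Ioo (0:ℝ) 1) :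
    a * (Real.log x + Real.log (1-x)) + b * (Real.log y + Real.log (1-y))
      ≤ Real.log (a*x+b*y) + Real.log (1-(a*x+b*y)) := by
  by_cases hne : x = y
  · subst hne
    have h : a*x+b*x = x := by linear_combination x * hab
    rw [h]
    linarith [congrArg (· * (Real.log x + Real.log (1-x))) hab]
  · exact (bar_lt a b x y ha hb hab hx hy hne).le

/-- Strict concavity of the barrier-regularized functional
`J_{μ*}(δ,u) = 2 fᵀu − ∑ₑ ρₑ E(δₑ) uᵀKₑu + μ* ∑ₑ (log δₑ + log(1−δₑ))`
on `(0,1)ⁿ × ℝᵐ`, provided `K(δ)` is positive definite there. -/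
theorem stmt_8 (n m : ℕ) (E0 ED μ : ℝ) (hED : 0 < ED) (hlt : ED < E0)
    (hμ : 0 < μ)
    (K : Fin n → Matrix (Fin m) (Fin m) ℝ) (hK : ∀ e, (K e).PosSemidef)
    (ρ : Fin n → ℝ) (hρ : ∀ e, 0 < ρ e)
    (f : Fin m → ℝ)
    (E : ℝ → ℝ) (hE : ∀ t, E t = ((1 - t) / E0 + t / ED)⁻¹)
    (hKpd : ∀ δ : Fin n → ℝ, (∀ e, δ e ∈ Set.Ioo (0:ℝ) 1) →
      (∑ e, (ρ e * E (δ e)) • K e).PosDef) :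
    StrictConcaveOn ℝ (((Set.univ : Set (Fin n)).pi fun _ => Set.Ioo (0:ℝ) 1) ×ˢ
        (Set.univ : Set (Fin m → ℝ)))
      (fun p : (Fin n → ℝ) × (Fin m → ℝ) =>
        2 * (f ⬝ᵥ p.2) - (∑ e, ρ e * E (p.1 e) * (p.2 ⬝ᵥ (K e).mulVec p.2))
          + μ * (∑ e, (Real.log (p.1 e) + Real.log (1 - p.1 e)))) := by
  have hE0 : 0 < E0 := hED.trans hlt
  have hgpos : ∀ t ∈ Set.Ioo (0:ℝ) 1, 0 < (1 - t) / E0 + t / ED := by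
    intro t ht
    exact add_pos (div_pos (by linarith [ht.2]) hE0) (div_pos ht.1 hED)
  have hMt : ∀ e, (K e)ᵀ = K e := by
    intro e
    have h := (hK e).1
    rwa [Matrix.IsHermitian, Matrix.conjTranspose_eq_transpose_of_trivial] at h
  constructor
  · exact (convex_pi fun _ _ => convex_Ioo 0 1).prod convex_univ
  intro p hp q hq hne a b ha hb hab
  obtain ⟨hp1, -⟩ := hp
  obtain ⟨hq1, -⟩ := hq
  have hpm : ∀ e, p.1 e ∈ Set.Ioo (0:ℝ) 1 := fun e => hp1 e (Set.mem_univ e)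
  have hqm : ∀ e, q.1 e ∈ Set.Ioo (0:ℝ) 1 := fun e => hq1 e (Set.mem_univ e)
  have hfst : (a • p + b • q).1 = a • p.1 + b • q.1 := rfl
  have hsnd : (a • p + b • q).2 = a • p.2 + b • q.2 := rfl
  simp only [hfst, hsnd, Pi.add_apply, Pi.smul_apply, smul_eq_mul]
  have hlin : f ⬝ᵥ (a • p.2 + b • q.2) = a * (f ⬝ᵥ p.2) + b * (f ⬝ᵥ q.2) := by
    simp [dotProduct_add, dotProduct_smul, smul_eq_mul]
  rw [hlin]
  by_cases hδ : p.1 = q.1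
  · -- same δ, different u
    have huv : p.2 ≠ q.2 := fun h => hne (Prod.ext hδ h)
    rw [← hδ]
    have hceq : ∀ e, a * p.1 e + b * p.1 e = p.1 e := fun e => by
      linear_combination (p.1 e) * hab
    simp_rw [hceq]
    set d := p.2 - q.2 with hdd
    have hd : d ≠ 0 := sub_ne_zero.2 huv
    have hPD := (hKpd p.1 hpm).dotProduct_mulVec_pos hd
    simp only [star_trivial] at hPD
    have hsum : d ⬝ᵥ (∑ e, (ρ e * E (p.1 e)) • K e) *ᵥ d
        = ∑ e, (ρ e * E (p.1 e)) * (d ⬝ᵥ (K e) *ᵥ d) := by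
      rw [dot_sum_mulVec]
      refine Finset.sum_congr rfl fun e _ => ?_
      rw [smul_mulVec, dotProduct_smul, smul_eq_mul]
    have hquad : a * (∑ e, ρ e * E (p.1 e) * (p.2 ⬝ᵥ (K e).mulVec p.2))
        + b * (∑ e, ρ e * E (p.1 e) * (q.2 ⬝ᵥ (K e).mulVec q.2))
        - (∑ e, ρ e * E (p.1 e) * ((a • p.2 + b • q.2) ⬝ᵥ (K e).mulVec (a • p.2 + b • q.2)))
        = a * b * (d ⬝ᵥ (∑ e, (ρ e * E (p.1 e)) • K e) *ᵥ d) := by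
      rw [hsum, Finset.mul_sum, Finset.mul_sum, Finset.mul_sum, ← Finset.sum_add_distrib,
        ← Finset.sum_sub_distrib]
      refine Finset.sum_congr rfl fun e _ => ?_
      have hdK : d ⬝ᵥ (K e) *ᵥ d = (p.2 ⬝ᵥ (K e).mulVec p.2)
          - 2 * (p.2 ⬝ᵥ (K e).mulVec q.2) + (q.2 ⬝ᵥ (K e).mulVec q.2) := by
        have hd2 : d = (1:ℝ) • p.2 + (-1:ℝ) • q.2 := by
          rw [hdd]; module
        rw [hd2, quad_expand (K e) (hMt e)]; ring
      rw [quad_expand (K e) (hMt e), hdK]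
      linear_combination (-(ρ e * E (p.1 e)) * (a * (p.2 ⬝ᵥ (K e).mulVec p.2)
        + b * (q.2 ⬝ᵥ (K e).mulVec q.2))) * hab
    have hμS : a * (μ * (∑ e, (Real.log (p.1 e) + Real.log (1 - p.1 e))))
        + b * (μ * (∑ e, (Real.log (p.1 e) + Real.log (1 - p.1 e))))
        = μ * (∑ e, (Real.log (p.1 e) + Real.log (1 - p.1 e))) := by
      linear_combination (μ * (∑ e, (Real.log (p.1 e) + Real.log (1 - p.1 e)))) * hab
    have hpos : 0 < a * b * (d ⬝ᵥ (∑ e, (ρ e * E (p.1 e)) • K e) *ᵥ d) :=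
      mul_pos (mul_pos ha hb) hPD
    linarith [hquad, hpos, hμS]
  · -- δ differ: barrier strict, quadratic nonstrict
    obtain ⟨e0, he0⟩ := Function.ne_iff.1 hδ
    have hSB : ∑ e, (a * (Real.log (p.1 e) + Real.log (1 - p.1 e))
          + b * (Real.log (q.1 e) + Real.log (1 - q.1 e)))
        < ∑ e, (Real.log (a * p.1 e + b * q.1 e) + Real.log (1 - (a * p.1 e + b * q.1 e))) := by
      refine Finset.sum_lt_sum (fun e _ => bar_le a b _ _ ha hb hab (hpm e) (hqm e))
        ⟨e0, Finset.mem_univ e0, bar_lt a b _ _ ha hb hab (hpm e0) (hqm e0) he0⟩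
    have hSQ : (∑ e, ρ e * E (a * p.1 e + b * q.1 e)
          * ((a • p.2 + b • q.2) ⬝ᵥ (K e).mulVec (a • p.2 + b • q.2)))
        ≤ a * (∑ e, ρ e * E (p.1 e) * (p.2 ⬝ᵥ (K e).mulVec p.2))
          + b * (∑ e, ρ e * E (q.1 e) * (q.2 ⬝ᵥ (K e).mulVec q.2)) := by
      rw [Finset.mul_sum, Finset.mul_sum, ← Finset.sum_add_distrib]
      refine Finset.sum_le_sum fun e _ => ?_
      have ht : 0 < (1 - p.1 e) / E0 + p.1 e / ED := hgpos _ (hpm e)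
      have hs : 0 < (1 - q.1 e) / E0 + q.1 e / ED := hgpos _ (hqm e)
      have hgc : (1 - (a * p.1 e + b * q.1 e)) / E0 + (a * p.1 e + b * q.1 e) / ED
          = a * ((1 - p.1 e) / E0 + p.1 e / ED) + b * ((1 - q.1 e) / E0 + q.1 e / ED) := by
        field_simp
        ring_nf
        linear_combination (-ED) * hab
      have hQx : 0 ≤ ((1 - q.1 e) / E0 + q.1 e / ED)^2 * (p.2 ⬝ᵥ (K e).mulVec p.2)
          - 2 * ((1 - q.1 e) / E0 + q.1 e / ED) * ((1 - p.1 e) / E0 + p.1 e / ED)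
            * (p.2 ⬝ᵥ (K e).mulVec q.2)
          + ((1 - p.1 e) / E0 + p.1 e / ED)^2 * (q.2 ⬝ᵥ (K e).mulVec q.2) := by
        have h0 := (hK e).dotProduct_mulVec_nonneg (((1 - q.1 e) / E0 + q.1 e / ED) • p.2
          + (-((1 - p.1 e) / E0 + p.1 e / ED)) • q.2)
        simp only [star_trivial] at h0
        rw [quad_expand (K e) (hMt e)] at h0
        nlinarith [h0]
      have hkey := key_scalar (p.2 ⬝ᵥ (K e).mulVec p.2) (q.2 ⬝ᵥ (K e).mulVec q.2)
        (p.2 ⬝ᵥ (K e).mulVec q.2) ((1 - p.1 e) / E0 + p.1 e / ED)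
        ((1 - q.1 e) / E0 + q.1 e / ED) a b ht hs ha hb hab hQx
      calc ρ e * E (a * p.1 e + b * q.1 e)
            * ((a • p.2 + b • q.2) ⬝ᵥ (K e).mulVec (a • p.2 + b • q.2))
          = ρ e * ((a * ((1 - p.1 e) / E0 + p.1 e / ED)
              + b * ((1 - q.1 e) / E0 + q.1 e / ED))⁻¹
            * (a^2 * (p.2 ⬝ᵥ (K e).mulVec p.2) + 2*a*b*(p.2 ⬝ᵥ (K e).mulVec q.2)
              + b^2 * (q.2 ⬝ᵥ (K e).mulVec q.2))) := by
            rw [hE, hgc, quad_expand (K e) (hMt e)]; ring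
        _ ≤ ρ e * (a * ((1 - p.1 e) / E0 + p.1 e / ED)⁻¹ * (p.2 ⬝ᵥ (K e).mulVec p.2)
              + b * ((1 - q.1 e) / E0 + q.1 e / ED)⁻¹ * (q.2 ⬝ᵥ (K e).mulVec q.2)) :=
            mul_le_mul_of_nonneg_left hkey (hρ e).le
        _ = a * (ρ e * E (p.1 e) * (p.2 ⬝ᵥ (K e).mulVec p.2))
              + b * (ρ e * E (q.1 e) * (q.2 ⬝ᵥ (K e).mulVec q.2)) := by
            rw [hE (p.1 e), hE (q.1 e)]; ring
    have hmul : μ * (∑ e, (a * (Real.log (p.1 e) + Real.log (1 - p.1 e))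
          + b * (Real.log (q.1 e) + Real.log (1 - q.1 e))))
        < μ * (∑ e, (Real.log (a * p.1 e + b * q.1 e)
          + Real.log (1 - (a * p.1 e + b * q.1 e)))) :=
      mul_lt_mul_of_pos_left hSB hμ
    have hexp : ∑ e, (a * (Real.log (p.1 e) + Real.log (1 - p.1 e))
          + b * (Real.log (q.1 e) + Real.log (1 - q.1 e)))
        = a * (∑ e, (Real.log (p.1 e) + Real.log (1 - p.1 e)))
          + b * (∑ e, (Real.log (q.1 e) + Real.log (1 - q.1 e))) := by
      rw [Finset.mul_sum, Finset.mul_sum, ← Finset.sum_add_distrib]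
    rw [hexp] at hmul
    nlinarith [hSQ, hmul]
end
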